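/- Let E be a directed graph in which no cycle has an entrance. Let x be an infinite path that is eventually periodic with data (n, p), where n ≥ 1 and p ≥ 1. If y is an infinite path with σ(y) = x (i.e. y(i+1) = x(i) for all i), then y is eventually periodic with data (n+1, p). -/
import Mathlib


/-- An infinite path in the directed graph with edge set `E` and
range/source maps `r, s : E → V`. -/
def IsInfinitePath {V E : Type*} (r s : E → V) (x : ℕ → E) : Prop :=
  ∀ i : ℕ, s (x i) = r (x (i + 1))

/-- `e 0, …, e (p-1)` is a cycle of length `p ≥ 1`. -/
def IsCycle {V E : Type*} (r s : E → V) (p : ℕ) (e : ℕ → E) : Prop :=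
  1 ≤ p ∧ (∀ i : ℕ, i + 1 < p → s (e i) = r (e (i + 1))) ∧ s (e (p - 1)) = r (e 0)

/-- The cycle `e 0, …, e (p-1)` has an entrance. -/
def CycleHasEntrance {V E : Type*} (r s : E → V) (p : ℕ) (e : ℕ → E) : Prop :=
  ∃ i < p, ∃ f : E, f ≠ e i ∧ r f = r (e i)

/-- No cycle in the graph has an entrance. -/
def NoCycleHasEntrance {V E : Type*} (r s : E → V) : Prop :=
  ∀ (p : ℕ) (e : ℕ → E), IsCycle r s p e → ¬ CycleHasEntrance r s p e

/-- `x` is eventually periodic with data `(n, p)`: `x (n+p+i) = x (n+i)` for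
all `i`, and the edges `x 0, …, x (n+p-1)` are pairwise distinct. -/
def EventuallyPeriodicData {E : Type*} (x : ℕ → E) (n p : ℕ) : Prop :=
  (∀ i : ℕ, x (n + p + i) = x (n + i)) ∧ Set.InjOn x (Set.Iio (n + p))

/-- If no cycle has an entrance, `x` is eventually periodic with data `(n, p)`
where `n, p ≥ 1`, and `σ(y) = x`, then `y` is eventually periodic with data
`(n+1, p)`. -/
theorem shift_preimage_eventuallyPeriodic
    {V E : Type*} (r s : E → V) (hnc : NoCycleHasEntrance r s)
    (x : ℕ → E) (hx : IsInfinitePath r s x)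
    (n p : ℕ) (hn : 1 ≤ n) (hp : 1 ≤ p)
    (hxper : EventuallyPeriodicData x n p)
    (y : ℕ → E) (hy : IsInfinitePath r s y)
    (hshift : ∀ i : ℕ, y (i + 1) = x i) :
    EventuallyPeriodicData y (n + 1) p := by
  obtain ⟨hper, hinj⟩ := hxper
  -- key: y 0 is none of x 0, …, x (n+p-1)
  have key : ∀ k, k < n + p → y 0 ≠ x k := by
    intro k hk h0
    -- s (x k) = r (x 0)
    have h2 : s (y 0) = r (y 1) := hy 0
    rw [h0, hshift 0] at h2
    -- x 0, …, x k is a cycle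
    have hcyc : IsCycle r s (k + 1) x := by
      refine ⟨Nat.succ_le_succ (Nat.zero_le _), fun i _ => hx i, ?_⟩
      simpa using h2
    -- with entrance x (k+1) at r (x 0)
    have hr : r (x (k + 1)) = r (x 0) := (hx k).symm.trans h2
    have hne : x (k + 1) ≠ x 0 := by
      rcases eq_or_lt_of_le (Nat.succ_le_of_lt hk) with heq | hlt
      · -- k + 1 = n + p, so x (k+1) = x n ≠ x 0
        have hxn : x (k + 1) = x n := by
          have h3 : k + 1 = n + p := heq
          rw [h3]
          simpa using hper 0
        rw [hxn]
        intro hceq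
        have : n = 0 := hinj (by simp; omega) (by simp; omega) hceq
        omega
      · intro hceq
        have : k + 1 = 0 := hinj (by simpa using hlt) (by simp; omega) hceq
        omega
    exact hnc (k + 1) x hcyc ⟨0, Nat.succ_pos k, x (k + 1), hne, hr⟩
  constructor
  · intro i
    have e1 : n + 1 + p + i = (n + p + i) + 1 := by ring
    have e2 : n + 1 + i = (n + i) + 1 := by ring
    rw [e1, e2, hshift, hshift, hper]
  · intro a ha b hb hab
    simp only [Set.mem_Iio] at ha hb
    match a, b with
    | 0, 0 => rfl
    | 0, b + 1 =>
      exact absurd ((hshift b ▸ hab : y 0 = x b)) (key b (by omega))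
    | a + 1, 0 =>
      exact absurd ((hshift a ▸ hab.symm : y 0 = x a)) (key a (by omega))
    | a + 1, b + 1 =>
      have : x a = x b := by rw [← hshift a, ← hshift b, hab]
      have := hinj (by simp; omega) (by simp; omega) this
      omega
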